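/- Fix a horizon T > 0 and slope α > 0 with α·T ≥ 2, and let s = T − √(2T/α). Then for every threshold θ ∈ [0, T], the switch-point-s strategy satisfies r(s, θ) / OPT(θ) ≥ √(2/(α·T)); that is, the strategy that explores the striving arm until time T − √(2T/α) and then switches achieves competitive ratio at least √(2/(α·T)) uniformly over all possible thresholds θ. -/

import Mathlib

/-- Reward of the switch-point-`s` strategy in the improving two-armed bandit:
if `θ ≤ s` the agent witnesses the increase and earns `(α/2)(T-θ)²`;
otherwise it switches to the stable arm and earns `T - s`. -/
noncomputable def reward (T α s θ : ℝ) : ℝ :=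
  if θ ≤ s then α / 2 * (T - θ) ^ 2 else T - s

/-- Optimal hindsight reward. -/
noncomputable def OPT (T α θ : ℝ) : ℝ :=
  max T (α / 2 * (T - θ) ^ 2)

theorem stmt0 (T α : ℝ) (hT : 0 < T) (hα : 0 < α) (hαT : 2 ≤ α * T)
    (s : ℝ) (hs : s = T - Real.sqrt (2 * T / α)) :
    ∀ θ ∈ Set.Icc (0 : ℝ) T,
      Real.sqrt (2 / (α * T)) ≤ reward T α s θ / OPT T α θ := by
  intro θ hθ
  obtain ⟨hθ0, hθT⟩ := hθ
  set c := Real.sqrt (2 * T / α) with hc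
  have hargnn : 0 ≤ 2 * T / α := by positivity
  have hcnn : 0 ≤ c := Real.sqrt_nonneg _
  have hc2 : c ^ 2 = 2 * T / α := Real.sq_sqrt hargnn
  have hcT : c ≤ T := by
    have h1 : c ^ 2 ≤ T ^ 2 := by
      rw [hc2]
      rw [div_le_iff₀ hα]
      nlinarith
    nlinarith
  have hcpos : 0 < c := by
    apply Real.sqrt_pos.mpr
    positivity
  have hrho : Real.sqrt (2 / (α * T)) = c / T := by
    have : 2 / (α * T) = (c / T) ^ 2 := by
      rw [div_pow, hc2]
      field_simp
    rw [this, Real.sqrt_sq (by positivity)]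
  rw [hrho]
  by_cases hcase : θ ≤ s
  · -- witnessed the increase: reward = (α/2)(T-θ)² ≥ T
    have hTθ : c ≤ T - θ := by
      have : θ ≤ T - c := by rw [← hs]; exact hcase
      linarith
    have hrw : T ≤ α / 2 * (T - θ) ^ 2 := by
      have h1 : c ^ 2 ≤ (T - θ) ^ 2 := by nlinarith
      have h2 : α / 2 * c ^ 2 = T := by rw [hc2]; field_simp
      nlinarith
    have hOPT : OPT T α θ = α / 2 * (T - θ) ^ 2 := by
      unfold OPT; exact max_eq_right hrw
    have hR : reward T α s θ = α / 2 * (T - θ) ^ 2 := by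
      unfold reward; simp [hcase]
    rw [hOPT, hR]
    have hpos : 0 < α / 2 * (T - θ) ^ 2 := lt_of_lt_of_le hT hrw
    rw [div_self (ne_of_gt hpos)]
    rw [div_le_one hT]
    exact hcT
  · -- switched: reward = T - s = c, OPT = T
    push_neg at hcase
    have hR : reward T α s θ = c := by
      unfold reward
      rw [if_neg (not_le.mpr hcase), hs]; ring
    have hlt : T - θ < c := by
      have : T - c < θ := by rw [← hs]; exact hcase
      linarith
    have hOPT : OPT T α θ = T := by
      unfold OPT
      apply max_eq_left
      have h1 : (T - θ) ^ 2 ≤ c ^ 2 := by nlinarith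
      have h2 : α / 2 * c ^ 2 = T := by rw [hc2]; field_simp
      nlinarith
    rw [hR, hOPT]
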